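/- arXiv:2408.05651 — 3 statements merged into one kernel-verified Lean document; each statement's English description precedes it below -/
import Mathlib

section
/- For λ ∈ [-1/2, 1], the function h : ℝ² → [0,∞) defined by h(x₁,x₂) = |x| + λ x₁²/|x| for x ≠ 0 and h(0) = 0 is convex. -/
open Set

private lemma norm_sq_eq_two (x : EuclideanSpace ℝ (Fin 2)) :
    ‖x‖^2 = (x 0)^2 + (x 1)^2 := by
  rw [EuclideanSpace.norm_eq, Real.sq_sqrt (by positivity)]
  simp [Fin.sum_univ_two, sq_abs]

private lemma coord_sq_le_norm_sq (x : EuclideanSpace ℝ (Fin 2)) (i : Fin 2) :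
    (x i)^2 ≤ ‖x‖^2 := by
  rw [norm_sq_eq_two]
  fin_cases i <;> simp <;> nlinarith [sq_nonneg (x 0), sq_nonneg (x 1)]

private lemma aux_ineq (a c u v w : ℝ) (hu : 0 < u) (hv : 0 < v) (hw : 0 < w)
    (hm : (a + c)^2 ≤ w^2) (hwuv : w ≤ u + v) :
    w + (a + c)^2 / w ≤ (u + a^2 / u) + (v + c^2 / v) := by
  have huv : 0 < u + v := by linarith
  have h1 : w + (a + c)^2 / w ≤ (u + v) + (a + c)^2 / (u + v) := by
    rw [← sub_nonneg]
    have key : ((u + v) + (a + c)^2 / (u + v)) - (w + (a + c)^2 / w)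
        = ((u + v - w) * (w * (u + v) - (a + c)^2)) / (w * (u + v)) := by
      field_simp
      ring
    rw [key]
    apply div_nonneg
    · apply mul_nonneg (by linarith)
      nlinarith
    · positivity
  have h2 : (a + c)^2 / (u + v) ≤ a^2 / u + c^2 / v := by
    rw [div_add_div _ _ hu.ne' hv.ne', div_le_div_iff₀ huv (by positivity)]
    nlinarith [sq_nonneg (a * v - c * u)]
  linarith

private lemma g_subadd (i : Fin 2) (x y : EuclideanSpace ℝ (Fin 2)) :
    ‖x + y‖ + ((x + y) i)^2 / ‖x + y‖
      ≤ (‖x‖ + (x i)^2 / ‖x‖) + (‖y‖ + (y i)^2 / ‖y‖) := by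
  by_cases hx : x = 0
  · simp [hx]
  by_cases hy : y = 0
  · simp [hy]
  by_cases hxy : x + y = 0
  · rw [hxy]
    simp only [norm_zero, div_zero, add_zero]
    positivity
  · have hu : 0 < ‖x‖ := norm_pos_iff.mpr hx
    have hv : 0 < ‖y‖ := norm_pos_iff.mpr hy
    have hw : 0 < ‖x + y‖ := norm_pos_iff.mpr hxy
    have happ : (x + y) i = x i + y i := rfl
    rw [happ]
    refine aux_ineq (x i) (y i) ‖x‖ ‖y‖ ‖x + y‖ hu hv hw ?_ (norm_add_le x y)
    have := coord_sq_le_norm_sq (x + y) i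
    rwa [happ] at this

private lemma g_smul (i : Fin 2) (t : ℝ) (ht : 0 ≤ t) (x : EuclideanSpace ℝ (Fin 2)) :
    ‖t • x‖ + ((t • x) i)^2 / ‖t • x‖ = t * (‖x‖ + (x i)^2 / ‖x‖) := by
  have h1 : ‖t • x‖ = t * ‖x‖ := by
    rw [norm_smul, Real.norm_of_nonneg ht]
  have h2 : (t • x) i = t * x i := rfl
  rw [h1, h2]
  rcases eq_or_lt_of_le ht with h | h
  · simp [← h]
  · by_cases hxn : ‖x‖ = 0
    · have hx0 : x = 0 := norm_eq_zero.mp hxn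
      have h0 : ((0 : EuclideanSpace ℝ (Fin 2)) i) = 0 := rfl
      simp [hx0, h0]
    · field_simp

private lemma g_convexOn (i : Fin 2) :
    ConvexOn ℝ Set.univ
      (fun x : EuclideanSpace ℝ (Fin 2) => ‖x‖ + (x i)^2 / ‖x‖) := by
  refine ⟨convex_univ, fun x _ y _ s t hs ht hst => ?_⟩
  simp only [smul_eq_mul]
  calc ‖s • x + t • y‖ + ((s • x + t • y) i)^2 / ‖s • x + t • y‖
      ≤ (‖s • x‖ + ((s • x) i)^2 / ‖s • x‖) + (‖t • y‖ + ((t • y) i)^2 / ‖t • y‖) :=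
        g_subadd i _ _
    _ = s * (‖x‖ + (x i)^2 / ‖x‖) + t * (‖y‖ + (y i)^2 / ‖y‖) := by
        rw [g_smul i s hs, g_smul i t ht]

/-- For λ ∈ [-1/2, 1], the function h : ℝ² → [0,∞) given by
h(x) = |x| + λ x₁²/|x| for x ≠ 0 and h(0) = 0 (the formula below yields 0 at 0
since division by zero is 0) is convex. -/
theorem convexity_of_h (l : ℝ) (hl1 : -(1/2) ≤ l) (hl2 : l ≤ 1) :
    ConvexOn ℝ Set.univ
      (fun x : EuclideanSpace ℝ (Fin 2) => ‖x‖ + l * (x 0)^2 / ‖x‖) := by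
  rcases le_or_gt 0 l with h0 | h0
  · have heq : (fun x : EuclideanSpace ℝ (Fin 2) => ‖x‖ + l * (x 0)^2 / ‖x‖)
        = fun x : EuclideanSpace ℝ (Fin 2) =>
            (1 - l) • ‖x‖ + l • (‖x‖ + (x 0)^2 / ‖x‖) := by
      funext x
      simp only [smul_eq_mul]
      ring
    rw [heq]
    exact (convexOn_univ_norm.smul (by linarith)).add ((g_convexOn 0).smul h0)
  · have heq : (fun x : EuclideanSpace ℝ (Fin 2) => ‖x‖ + l * (x 0)^2 / ‖x‖)
        = fun x : EuclideanSpace ℝ (Fin 2) =>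
            (1 + 2 * l) • ‖x‖ + (-l) • (‖x‖ + (x 1)^2 / ‖x‖) := by
      funext x
      simp only [smul_eq_mul]
      by_cases hx : x = 0
      · have h00 : ((0 : EuclideanSpace ℝ (Fin 2)) 0) = 0 := rfl
        have h01 : ((0 : EuclideanSpace ℝ (Fin 2)) 1) = 0 := rfl
        simp [hx, h00, h01]
      · have hn : ‖x‖ ≠ 0 := norm_ne_zero_iff.mpr hx
        have hsq : ‖x‖^2 = (x 0)^2 + (x 1)^2 := norm_sq_eq_two x
        field_simp
        linear_combination (-l) * hsq
    rw [heq]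
    exact (convexOn_univ_norm.smul (by linarith)).add
      ((g_convexOn 1).smul (by linarith))
end

section
/- Let λ ∈ [-1/2, 1] and γ > 0. Define ĝ : ℝ³ × ℝ³ → [0,∞) by ĝ(v,p) = γ(|p||v|² + λ(v·p)²/|p|) for p ≠ 0 and ĝ(v,0) = 0. Then for every fixed v ∈ ℝ³, the map p ↦ ĝ(v,p) is convex and positively one-homogeneous on ℝ³. -/
open scoped RealInnerProductSpace

section aux
variable {E : Type*} [NormedAddCommGroup E] [InnerProductSpace ℝ E]

private noncomputable def gfun (l : ℝ) (v p : E) : ℝ :=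
  ‖p‖ * ‖v‖^2 + l * ⟪v, p⟫^2 / ‖p‖

private lemma gfun_zero (l : ℝ) (v : E) : gfun l v 0 = 0 := by
  simp [gfun]

private lemma inner_sq_le (v p : E) : ⟪v, p⟫^2 ≤ ‖v‖^2 * ‖p‖^2 := by
  have h := abs_real_inner_le_norm v p
  nlinarith [abs_nonneg ⟪v, p⟫, sq_abs ⟪v, p⟫, norm_nonneg v, norm_nonneg p]

private lemma gfun_nonneg {l : ℝ} (hl1 : -(1/2) ≤ l) (v p : E) : 0 ≤ gfun l v p := by
  rcases eq_or_ne p 0 with rfl | hp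
  · simp [gfun]
  · have hnp : (0:ℝ) < ‖p‖ := norm_pos_iff.mpr hp
    have hcs := inner_sq_le v p
    have h1 : -(1/2) * (‖v‖^2 * ‖p‖^2) ≤ l * ⟪v, p⟫^2 := by nlinarith [sq_nonneg ⟪v, p⟫]
    have h2 : (-(1/2) * (‖v‖^2 * ‖p‖^2)) / ‖p‖ ≤ l * ⟪v, p⟫^2 / ‖p‖ :=
      div_le_div_of_nonneg_right h1 hnp.le |>.trans_eq rfl
    have h3 : (-(1/2) * (‖v‖^2 * ‖p‖^2)) / ‖p‖ = -(1/2) * ‖v‖^2 * ‖p‖ := by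
      field_simp
    have : 0 ≤ ‖p‖ * ‖v‖^2 := by positivity
    simp only [gfun]
    nlinarith [h2, h3]

private lemma gfun_smul (l : ℝ) (v : E) {t : ℝ} (ht : 0 < t) (p : E) :
    gfun l v (t • p) = t * gfun l v p := by
  simp only [gfun, norm_smul, real_inner_smul_right, Real.norm_eq_abs,
    abs_of_pos ht]
  rcases eq_or_ne p 0 with rfl | hp
  · simp
  · have hnp : ‖p‖ ≠ 0 := norm_ne_zero_iff.mpr hp
    field_simp

set_option maxHeartbeats 2000000 in
private lemma gfun_subadd {l : ℝ} (hl1 : -(1/2) ≤ l) (hl2 : l ≤ 1) (v p q : E) :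
    gfun l v (p + q) ≤ gfun l v p + gfun l v q := by
  rcases eq_or_ne v 0 with rfl | hv
  · simp [gfun]
  rcases eq_or_ne p 0 with rfl | hp
  · simp [gfun_zero]
  rcases eq_or_ne q 0 with rfl | hq
  · simp [gfun_zero]
  rcases eq_or_ne (p + q) 0 with hs | hs
  · rw [hs, gfun_zero]
    exact add_nonneg (gfun_nonneg hl1 v p) (gfun_nonneg hl1 v q)
  set np := ‖p‖ with hnp_def
  set nq := ‖q‖ with hnq_def
  set ns := ‖p + q‖ with hns_def
  set a := ⟪v, p⟫ with ha_def
  set b := ⟪v, q⟫ with hb_def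
  set V := ‖v‖ with hV_def
  have hnp : (0:ℝ) < np := norm_pos_iff.mpr hp
  have hnq : (0:ℝ) < nq := norm_pos_iff.mpr hq
  have hns : (0:ℝ) < ns := norm_pos_iff.mpr hs
  have hab : ⟪v, p + q⟫ = a + b := inner_add_right v p q
  have htri : ns ≤ np + nq := norm_add_le p q
  have hcsp : a^2 ≤ V^2 * np^2 := inner_sq_le v p
  have hcsq : b^2 ≤ V^2 * nq^2 := inner_sq_le v q
  have hcss : (a + b)^2 ≤ V^2 * ns^2 := by
    have := inner_sq_le v (p + q); rwa [hab] at this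
  simp only [gfun, ← hnp_def, ← hnq_def, ← hns_def, ← ha_def, ← hb_def, ← hV_def, hab]
  rcases le_or_gt 0 l with hl | hl
  · -- l ≥ 0 case
    set c := (a + b) / ns with hc_def
    have hc2 : c^2 ≤ V^2 := by
      rw [hc_def, div_pow, div_le_iff₀ (by positivity)]
      linarith [hcss]
    have h3 : l * (a + b)^2 / ns = 2 * l * c * (a + b) - l * c^2 * ns := by
      rw [hc_def]; field_simp; ring
    have h1 : 2 * l * c * a - l * c^2 * np ≤ l * a^2 / np := by
      have key : 0 ≤ l * (a - c * np)^2 / np := by positivity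
      have id1 : l * a^2 / np = l * (a - c*np)^2 / np + (2 * l * c * a - l * c^2 * np) := by
        field_simp; ring
      linarith
    have h2 : 2 * l * c * b - l * c^2 * nq ≤ l * b^2 / nq := by
      have key : 0 ≤ l * (b - c * nq)^2 / nq := by positivity
      have id1 : l * b^2 / nq = l * (b - c*nq)^2 / nq + (2 * l * c * b - l * c^2 * nq) := by
        field_simp; ring
      linarith
    have hcoefnn : 0 ≤ V^2 - l * c^2 := by
      have h5 : l * c^2 ≤ c^2 := mul_le_of_le_one_left (sq_nonneg c) hl2
      linarith [hc2]
    have hcoef' : (V^2 - l * c^2) * ns ≤ (V^2 - l * c^2) * (np + nq) :=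
      mul_le_mul_of_nonneg_left htri hcoefnn
    have e1 : (V^2 - l * c^2) * ns = V^2 * ns - l * c^2 * ns := by ring
    have e2 : (V^2 - l * c^2) * (np + nq) = V^2 * np + V^2 * nq - l * c^2 * np - l * c^2 * nq := by
      ring
    linarith [h1, h2, h3, hcoef']
  · -- l < 0 case
    have hV : (0:ℝ) < V := norm_pos_iff.mpr hv
    set L : E → E := fun x => V • x - (⟪v, x⟫ / V) • v with hL_def
    have hLadd : L (p + q) = L p + L q := by
      simp only [hL_def, hab, smul_add, add_div, add_smul, ← ha_def, ← hb_def]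
      abel
    set Tp := ‖L p‖ with hTp_def
    set Tq := ‖L q‖ with hTq_def
    set Ts := ‖L (p + q)‖ with hTs_def
    have hVne : V ≠ 0 := ne_of_gt hV
    have hTsq : ∀ x : E, ‖L x‖^2 = V^2 * ‖x‖^2 - ⟪v, x⟫^2 := by
      intro x
      have hx : ‖L x‖^2 = ‖V • x‖^2 - 2 * ⟪V • x, (⟪v, x⟫ / V) • v⟫ + ‖(⟪v, x⟫ / V) • v‖^2 := by
        rw [hL_def]
        exact norm_sub_sq_real _ _
      rw [hx]
      rw [norm_smul, norm_smul, real_inner_smul_left, real_inner_smul_right]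
      rw [real_inner_comm x v]
      simp only [Real.norm_eq_abs]
      rw [mul_pow, mul_pow, sq_abs, sq_abs, ← hV_def]
      field_simp
      ring
    have hTp2 : Tp^2 = V^2 * np^2 - a^2 := hTsq p
    have hTq2 : Tq^2 = V^2 * nq^2 - b^2 := hTsq q
    have hTs2 : Ts^2 = V^2 * ns^2 - (a + b)^2 := by rw [hTs_def, hTsq, hab, hns_def]
    have hTsub : Ts ≤ Tp + Tq := by rw [hTs_def, hLadd]; exact norm_add_le _ _
    have hTp0 : 0 ≤ Tp := norm_nonneg _
    have hTq0 : 0 ≤ Tq := norm_nonneg _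
    have hTs0 : 0 ≤ Ts := norm_nonneg _
    set c := Ts / ns with hc_def
    have hc0 : 0 ≤ c := div_nonneg hTs0 hns.le
    have hc2 : c^2 ≤ V^2 := by
      rw [hc_def, div_pow, div_le_iff₀ (by positivity)]
      linarith [hTs2, sq_nonneg (a + b)]
    -- rewrite gfun values
    have ep : np * V^2 + l * a^2 / np = (1 + l) * V^2 * np + (-l) * Tp^2 / np := by
      rw [hTp2]; field_simp; ring
    have eq' : nq * V^2 + l * b^2 / nq = (1 + l) * V^2 * nq + (-l) * Tq^2 / nq := by
      rw [hTq2]; field_simp; ring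
    have es : ns * V^2 + l * (a + b)^2 / ns = (1 + l) * V^2 * ns + (-l) * Ts^2 / ns := by
      rw [hTs2]; field_simp; ring
    have hml : (0:ℝ) ≤ -l := by linarith
    have h3 : (-l) * Ts^2 / ns = 2 * (-l) * c * Ts - (-l) * c^2 * ns := by
      rw [hc_def]; field_simp; ring
    have h1 : 2 * (-l) * c * Tp - (-l) * c^2 * np ≤ (-l) * Tp^2 / np := by
      have key : 0 ≤ (-l) * (Tp - c * np)^2 / np := by positivity
      have id1 : (-l) * Tp^2 / np
          = (-l) * (Tp - c*np)^2 / np + (2 * (-l) * c * Tp - (-l) * c^2 * np) := by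
        field_simp; ring
      linarith
    have h2 : 2 * (-l) * c * Tq - (-l) * c^2 * nq ≤ (-l) * Tq^2 / nq := by
      have key : 0 ≤ (-l) * (Tq - c * nq)^2 / nq := by positivity
      have id1 : (-l) * Tq^2 / nq
          = (-l) * (Tq - c*nq)^2 / nq + (2 * (-l) * c * Tq - (-l) * c^2 * nq) := by
        field_simp; ring
      linarith
    have hcoefnn : 0 ≤ (1 + l) * V^2 - (-l) * c^2 := by
      have h5 : (-l) * c^2 ≤ (-l) * V^2 := mul_le_mul_of_nonneg_left hc2 hml
      have h6 : (-l) * V^2 ≤ (1 + l) * V^2 :=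
        mul_le_mul_of_nonneg_right (by linarith) (sq_nonneg V)
      linarith
    have hcoef' : ((1 + l) * V^2 - (-l) * c^2) * ns ≤ ((1 + l) * V^2 - (-l) * c^2) * (np + nq) :=
      mul_le_mul_of_nonneg_left htri hcoefnn
    have hT' : 2 * (-l) * c * Ts ≤ 2 * (-l) * c * (Tp + Tq) :=
      mul_le_mul_of_nonneg_left hTsub (by positivity)
    linarith [h1, h2, h3, hcoef', hT', ep, eq', es]

end aux

/-- For λ ∈ [-1/2,1], γ > 0, the extended surface energy density
ĝ(v,p) = γ(|p||v|² + λ(v·p)²/|p|) (with ĝ(v,0) = 0; the formula below yields 0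
at p = 0 since division by zero is 0) is, for every fixed v, convex and
positively one-homogeneous in p. -/
theorem ghat_convex_and_one_homogeneous (γ l : ℝ) (hγ : 0 < γ)
    (hl1 : -(1/2) ≤ l) (hl2 : l ≤ 1) (v : EuclideanSpace ℝ (Fin 3)) :
    ConvexOn ℝ Set.univ (fun p : EuclideanSpace ℝ (Fin 3) =>
        γ * (‖p‖ * ‖v‖^2 + l * ⟪v, p⟫^2 / ‖p‖)) ∧
    ∀ t : ℝ, 0 < t → ∀ p : EuclideanSpace ℝ (Fin 3),
      γ * (‖t • p‖ * ‖v‖^2 + l * ⟪v, t • p⟫^2 / ‖t • p‖)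
        = t * (γ * (‖p‖ * ‖v‖^2 + l * ⟪v, p⟫^2 / ‖p‖)) := by
  have hom : ∀ t : ℝ, 0 < t → ∀ p : EuclideanSpace ℝ (Fin 3),
      γ * (‖t • p‖ * ‖v‖^2 + l * ⟪v, t • p⟫^2 / ‖t • p‖)
        = t * (γ * (‖p‖ * ‖v‖^2 + l * ⟪v, p⟫^2 / ‖p‖)) := by
    intro t ht p
    have h := gfun_smul l v ht p
    simp only [gfun] at h
    rw [h]; ring
  refine ⟨⟨convex_univ, ?_⟩, hom⟩
  intro x _ y _ a b ha hb hab
  show γ * gfun l v (a • x + b • y) ≤ a • (γ * gfun l v x) + b • (γ * gfun l v y)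
  simp only [smul_eq_mul]
  rcases eq_or_lt_of_le ha with rfl | ha'
  · simp only [zero_add] at hab
    subst hab
    simp [zero_smul, one_smul]
  rcases eq_or_lt_of_le hb with rfl | hb'
  · simp only [add_zero] at hab
    subst hab
    simp [zero_smul, one_smul]
  have hsub := gfun_subadd hl1 hl2 v (a • x) (b • y)
  have h1 : γ * gfun l v (a • x + b • y)
      ≤ γ * (gfun l v (a • x) + gfun l v (b • y)) :=
    mul_le_mul_of_nonneg_left hsub hγ.le
  rw [gfun_smul l v ha' x, gfun_smul l v hb' y] at h1
  nlinarith [h1]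
end

section
/- Let e ∈ ℝ³ be a unit vector and λ ∈ [-1/2,1]. For any two-dimensional linear subspace V₂ ⊆ ℝ³, the restriction to V₂ of the map p ↦ |p| + λ(e·p)²/|p| (extended by 0 at p=0) is convex. In particular, if e₁ is the orthogonal projection of e onto V₂, then for p ∈ V₂, p ≠ 0, one has |p| + λ(e·p)²/|p| = |p| + λ|e₁|²((e₁/|e₁|)·p)²/|p| when e₁ ≠ 0. -/
open scoped RealInnerProductSpace

private lemma scalar_ineq (μ c t s r w n : ℝ) (hμ0 : 0 ≤ μ) (hμ1 : μ ≤ 1)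
    (hc : 0 ≤ c) (ht : 0 ≤ t) (hs : 0 ≤ s) (hn : 0 ≤ n)
    (hcn : c ≤ n) (hcts : c ≤ t + s) (htr : t ≤ r) (hsw : s ≤ w) (hnrw : n ≤ r + w) :
    n + μ * c^2 / n ≤ (r + μ * t^2 / r) + (w + μ * s^2 / w) := by
  have hr : 0 ≤ r := ht.trans htr
  have hw : 0 ≤ w := hs.trans hsw
  rcases eq_or_lt_of_le hn with h0 | hnpos
  · have hc0 : c = 0 := le_antisymm (hcn.trans h0.symm.le) hc
    rw [← h0, hc0]
    have h1 : 0 ≤ μ * t^2 / r := by positivity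
    have h2 : 0 ≤ μ * s^2 / w := by positivity
    simp
    linarith
  · have hm : 0 < r + w := lt_of_lt_of_le hnpos hnrw
    have key : μ * c^2 ≤ n * (r + w) := by nlinarith
    have step1 : n + μ * c^2 / n ≤ (r + w) + μ * c^2 / (r + w) := by
      rw [← sub_nonneg]
      have e : ((r + w) + μ * c^2 / (r + w)) - (n + μ * c^2 / n)
          = ((r + w) - n) * (n * (r + w) - μ * c^2) / (n * (r + w)) := by
        field_simp
        ring
      rw [e]
      apply div_nonneg
      · exact mul_nonneg (by linarith) (by linarith)
      · positivity
    have step2 : μ * c^2 / (r + w) ≤ μ * t^2 / r + μ * s^2 / w := by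
      rcases eq_or_lt_of_le hr with hr0 | hrpos
      · have ht0 : t = 0 := le_antisymm (htr.trans hr0.symm.le) ht
        have hwpos : 0 < w := by
          rcases eq_or_lt_of_le hw with hw0 | h
          · exfalso; rw [← hr0, ← hw0] at hnrw; linarith
          · exact h
        rw [← hr0, ht0, zero_add]
        have hcs : c ≤ s := by linarith
        have hmain : μ * c^2 / w ≤ μ * s^2 / w := by gcongr
        norm_num
        linarith [hmain]

      · rcases eq_or_lt_of_le hw with hw0 | hwpos
        · have hs0 : s = 0 := le_antisymm (hsw.trans hw0.symm.le) hs
          rw [← hw0, hs0, add_zero]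
          have hct : c ≤ t := by linarith
          have hmain : μ * c^2 / r ≤ μ * t^2 / r := by gcongr
          norm_num
          exact hmain

        · have expand : μ * t^2 / r + μ * s^2 / w = (μ * t^2 * w + μ * s^2 * r) / (r * w) := by
            field_simp
          rw [expand, div_le_div_iff₀ hm (by positivity)]
          have hrw : (0:ℝ) ≤ r * w := by positivity
          have hc2 : c^2 ≤ (t+s)^2 := by nlinarith
          have h1 : c^2 * (r*w) ≤ (t+s)^2 * (r*w) := mul_le_mul_of_nonneg_right hc2 hrw
          have h2 : (t+s)^2 * (r*w) ≤ (t^2*w + s^2*r) * (r+w) := by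
            nlinarith [sq_nonneg (t*w - s*r)]
          have h3 : μ * (c^2 * (r*w)) ≤ μ * ((t^2*w + s^2*r) * (r+w)) :=
            mul_le_mul_of_nonneg_left (h1.trans h2) hμ0
          nlinarith [h3]
    linarith

private lemma core_convex (μ : ℝ) (hμ0 : 0 ≤ μ) (hμ1 : μ ≤ 1)
    (N : EuclideanSpace ℝ (Fin 3) → ℝ) (hN0 : ∀ p, 0 ≤ N p)
    (hNle : ∀ p, N p ≤ ‖p‖) (hNadd : ∀ p q, N (p + q) ≤ N p + N q)
    (hNsmul : ∀ (c : ℝ), 0 ≤ c → ∀ p, N (c • p) = c * N p) :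
    ConvexOn ℝ Set.univ (fun p => ‖p‖ + μ * (N p)^2 / ‖p‖) := by
  set F : EuclideanSpace ℝ (Fin 3) → ℝ := fun p => ‖p‖ + μ * (N p)^2 / ‖p‖ with hF
  have hsub : ∀ p q, F (p + q) ≤ F p + F q := by
    intro p q
    exact scalar_ineq μ (N (p+q)) (N p) (N q) ‖p‖ ‖q‖ ‖p+q‖ hμ0 hμ1
      (hN0 _) (hN0 _) (hN0 _) (norm_nonneg _) (hNle _) (hNadd p q)
      (hNle p) (hNle q) (norm_add_le p q)
  have hhom : ∀ (a : ℝ), 0 ≤ a → ∀ p, F (a • p) = a * F p := by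
    intro a ha p
    rcases eq_or_lt_of_le ha with ha0 | hapos
    · simp [hF, ← ha0, hNsmul 0 le_rfl p]
    · have hna : ‖a • p‖ = a * ‖p‖ := by
        rw [norm_smul, Real.norm_eq_abs, abs_of_pos hapos]
      rcases eq_or_ne ‖p‖ 0 with hp0 | hp0
      · have hNp : N p = 0 := le_antisymm (by rw [← hp0]; exact hNle p) (hN0 p)
        simp [hF, hna, hp0, hNsmul a ha p, hNp]
      · simp only [hF, hna, hNsmul a ha p]
        field_simp
  refine ⟨convex_univ, ?_⟩
  intro x _ y _ a b ha hb hab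
  calc F (a • x + b • y) ≤ F (a • x) + F (b • y) := hsub _ _
    _ = a * F x + b * F y := by rw [hhom a ha, hhom b hb]
    _ = a • F x + b • F y := by simp [smul_eq_mul]

private lemma convexOn_congr {s : Set (EuclideanSpace ℝ (Fin 3))}
    {f g : EuclideanSpace ℝ (Fin 3) → ℝ}
    (h : ConvexOn ℝ s f) (hfg : ∀ x ∈ s, f x = g x) : ConvexOn ℝ s g := by
  refine ⟨h.1, fun x hx y hy a b ha hb hab => ?_⟩
  rw [← hfg x hx, ← hfg y hy, ← hfg _ (h.1 hx hy ha hb hab)]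
  exact h.2 hx hy ha hb hab

set_option maxHeartbeats 1000000 in
/-- For a unit vector e ∈ ℝ³ and λ ∈ [-1/2,1], the restriction to any
two-dimensional subspace V₂ of p ↦ |p| + λ(e·p)²/|p| (extended by 0 at p = 0;
the formula yields 0 there since division by zero is 0) is convex; moreover for
p ∈ V₂, p ≠ 0, and e₁ ≠ 0 the orthogonal projection of e on V₂,
|p| + λ(e·p)²/|p| = |p| + λ|e₁|²((e₁/|e₁|)·p)²/|p|. -/
theorem restriction_convex_on_plane (l : ℝ) (hl1 : -(1/2) ≤ l) (hl2 : l ≤ 1)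
    (e : EuclideanSpace ℝ (Fin 3)) (he : ‖e‖ = 1)
    (V : Submodule ℝ (EuclideanSpace ℝ (Fin 3))) (hV : Module.finrank ℝ V = 2) :
    ConvexOn ℝ (V : Set (EuclideanSpace ℝ (Fin 3)))
      (fun p : EuclideanSpace ℝ (Fin 3) => ‖p‖ + l * ⟪e, p⟫^2 / ‖p‖) ∧
    ∀ p : EuclideanSpace ℝ (Fin 3), p ∈ V → p ≠ 0 →
      ∀ e₁ : EuclideanSpace ℝ (Fin 3),
        e₁ = (V.orthogonalProjection e : EuclideanSpace ℝ (Fin 3)) → e₁ ≠ 0 →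
        ‖p‖ + l * ⟪e, p⟫^2 / ‖p‖
          = ‖p‖ + l * ‖e₁‖^2 * ⟪‖e₁‖⁻¹ • e₁, p⟫^2 / ‖p‖ := by
  have _i : CompleteSpace V := FiniteDimensional.complete ℝ V
  obtain ⟨E₁, hE₁⟩ : ∃ E₁ : EuclideanSpace ℝ (Fin 3),
      E₁ = (V.orthogonalProjection e : EuclideanSpace ℝ (Fin 3)) := ⟨_, rfl⟩
  have hproj : ∀ p ∈ V, ⟪e, p⟫ = ⟪E₁, p⟫ := by
    intro p hp
    have horth : e - E₁ ∈ Vᗮ := by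
      rw [hE₁]; exact Submodule.sub_starProjection_mem_orthogonal (K := V) e
    have h0 : ⟪p, e - E₁⟫ = 0 := (Submodule.mem_orthogonal V (e - E₁)).mp horth p hp
    have h1 : ⟪e - E₁, p⟫ = 0 := by rw [real_inner_comm]; exact h0
    have h2 : ⟪e - E₁, p⟫ = ⟪e, p⟫ - ⟪E₁, p⟫ := inner_sub_left e E₁ p
    linarith
  have hnormle : ‖E₁‖ ≤ 1 := by
    have h1 : ‖V.orthogonalProjection e‖ ≤ ‖V.orthogonalProjection‖ * ‖e‖ :=
      (V.orthogonalProjection).le_opNorm e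
    have h2 : ‖V.orthogonalProjection‖ ≤ 1 := Submodule.orthogonalProjectionOnto_norm_le V
    have h3 : ‖E₁‖ = ‖V.orthogonalProjection e‖ := by rw [hE₁]; rfl
    rw [he, mul_one] at h1
    rw [h3]
    linarith
  constructor
  · -- convexity
    obtain ⟨μ, hμdef⟩ : ∃ μ : ℝ, μ = l * ‖E₁‖^2 := ⟨_, rfl⟩
    have hsq0 : (0:ℝ) ≤ ‖E₁‖^2 := by positivity
    have hsq1 : ‖E₁‖^2 ≤ 1 := by nlinarith [norm_nonneg E₁]
    have hμ1 : μ ≤ 1 := by nlinarith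
    have hμhalf : -(1/2) ≤ μ := by nlinarith
    obtain ⟨u, hu⟩ : ∃ u : EuclideanSpace ℝ (Fin 3), u = ‖E₁‖⁻¹ • E₁ := ⟨_, rfl⟩
    have hkey : ∀ p ∈ V, l * ⟪e, p⟫^2 = μ * ⟪u, p⟫^2 := by
      intro p hp
      rw [hproj p hp]
      rcases eq_or_ne E₁ 0 with h0 | h0
      · simp [hu, h0, hμdef]
      · have hk : ‖E₁‖ ≠ 0 := norm_ne_zero_iff.mpr h0
        rw [hu, real_inner_smul_left, hμdef]
        field_simp
    have huE : E₁ ≠ 0 → ‖u‖ = 1 := by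
      intro h0
      have hk : ‖E₁‖ ≠ 0 := norm_ne_zero_iff.mpr h0
      rw [hu, norm_smul, Real.norm_eq_abs, abs_inv, abs_of_nonneg (norm_nonneg _),
        inv_mul_cancel₀ hk]
    have hule : ‖u‖ ≤ 1 := by
      rcases eq_or_ne E₁ 0 with h0 | h0
      · simp [hu, h0]
      · rw [huE h0]
    have hNle : ∀ p, |⟪u, p⟫| ≤ ‖p‖ := by
      intro p
      calc |⟪u, p⟫| ≤ ‖u‖ * ‖p‖ := abs_real_inner_le_norm u p
        _ ≤ 1 * ‖p‖ := mul_le_mul_of_nonneg_right hule (norm_nonneg p)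
        _ = ‖p‖ := one_mul _
    have hEmu : E₁ = 0 → μ = 0 := by intro h0; rw [hμdef, h0]; simp
    clear hμdef hu hproj hnormle hsq0 hsq1 hE₁ hV he hl1 hl2
    by_cases hμ0 : 0 ≤ μ
    · -- positive case
      have hcore := core_convex μ hμ0 hμ1 (fun p => |⟪u, p⟫|)
        (fun p => abs_nonneg _) hNle
        (fun p q => by
          show |⟪u, p + q⟫| ≤ |⟪u, p⟫| + |⟪u, q⟫|
          rw [inner_add_right]
          exact abs_add_le _ _)
        (fun c hc p => by
          show |⟪u, c • p⟫| = c * |⟪u, p⟫|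
          rw [real_inner_smul_right, abs_mul, abs_of_nonneg hc])
      refine convexOn_congr (hcore.subset (Set.subset_univ _) V.convex) ?_
      intro p hp
      simp only [sq_abs]
      rw [hkey p hp]
    · -- negative case
      push_neg at hμ0
      have hne : E₁ ≠ 0 := fun h => absurd (hEmu h) (by intro h'; rw [h'] at hμ0; exact lt_irrefl 0 hμ0)
      have hunorm : ‖u‖ = 1 := huE hne
      obtain ⟨c, hcdef⟩ : ∃ c : ℝ, c = 1 + μ := ⟨_, rfl⟩
      have hcpos : 0 < c := by rw [hcdef]; linarith
      obtain ⟨μ', hμ'def⟩ : ∃ x : ℝ, x = -μ / c := ⟨_, rfl⟩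
      have hμ'0 : 0 ≤ μ' := by rw [hμ'def]; apply div_nonneg <;> linarith
      have hμ'1 : μ' ≤ 1 := by
        rw [hμ'def, div_le_one hcpos]
        linarith [hcdef]
      have hcmu : c * μ' = -μ := by
        rw [hμ'def]
        field_simp
      have hLsq : ∀ p : EuclideanSpace ℝ (Fin 3),
          ‖p - ⟪u, p⟫ • u‖^2 = ‖p‖^2 - ⟪u, p⟫^2 := by
        intro p
        rw [norm_sub_sq_real, real_inner_smul_right, norm_smul, Real.norm_eq_abs,
          mul_pow, sq_abs, hunorm, real_inner_comm p u]
        ring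
      have hcore := core_convex μ' hμ'0 hμ'1 (fun p => ‖p - ⟪u, p⟫ • u‖)
        (fun p => norm_nonneg _)
        (fun p => by
          show ‖p - ⟪u, p⟫ • u‖ ≤ ‖p‖
          have h1 : ‖p - ⟪u, p⟫ • u‖^2 ≤ ‖p‖^2 := by
            rw [hLsq p]; nlinarith [sq_nonneg ⟪u, p⟫]
          nlinarith [norm_nonneg (p - ⟪u, p⟫ • u), norm_nonneg p])
        (fun p q => by
          show ‖(p + q) - ⟪u, p + q⟫ • u‖ ≤ _
          have heq : (p + q) - ⟪u, p + q⟫ • u = (p - ⟪u, p⟫ • u) + (q - ⟪u, q⟫ • u) := by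
            rw [inner_add_right, add_smul]
            abel
          rw [heq]
          exact norm_add_le _ _)
        (fun a ha p => by
          show ‖(a • p) - ⟪u, a • p⟫ • u‖ = a * ‖p - ⟪u, p⟫ • u‖
          have heq : (a • p) - ⟪u, a • p⟫ • u = a • (p - ⟪u, p⟫ • u) := by
            rw [real_inner_smul_right, smul_sub, smul_smul]
          rw [heq, norm_smul, Real.norm_eq_abs, abs_of_nonneg ha])
      have hsmul := hcore.smul (le_of_lt hcpos)
      refine convexOn_congr (hsmul.subset (Set.subset_univ _) V.convex) ?_
      intro p hp
      simp only [smul_eq_mul]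
      rw [hLsq p, hkey p hp]
      rcases eq_or_ne p 0 with hp0 | hp0
      · simp [hp0]
      · have hnp : ‖p‖ ≠ 0 := norm_ne_zero_iff.mpr hp0
        have hc0 : c ≠ 0 := ne_of_gt hcpos
        have h1μ : (1:ℝ) + μ ≠ 0 := by rw [hcdef] at hcpos; linarith
        set t : ℝ := ⟪u, p⟫ with ht
        clear_value t
        rw [hμ'def, hcdef]
        field_simp
        ring
  · -- equality
    intro p hp hp0 e₁ he₁ he₁0
    rw [he₁, ← hE₁]
    rw [he₁, ← hE₁] at he₁0
    have hk : ‖E₁‖ ≠ 0 := norm_ne_zero_iff.mpr he₁0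
    rw [hproj p hp, real_inner_smul_left]
    field_simp
end
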